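/- The class of P_k-free graphs is closed under vertex contraction: if G has no induced path on k vertices and v ∈ V(G), then G/v has no induced path on k vertices. -/

import Mathlib

open List

namespace PkAux

variable {V : Type*}

def edgesOfList : List V → List (Sym2 V)
  | [] => []
  | [_] => []
  | a :: b :: l => s(a, b) :: edgesOfList (b :: l)

/-- `x` and `y` occur consecutively (in this order) in `l`. -/
def Step (l : List V) (x y : V) : Prop :=
  ∃ i : ℕ, ∃ h : i + 1 < l.length, l[i] = x ∧ l[i + 1] = y

lemma step_nil {x y : V} : ¬ Step ([] : List V) x y := by
  rintro ⟨i, h, -⟩; simp at h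

lemma step_single {z x y : V} : ¬ Step [z] x y := by
  rintro ⟨i, h, -⟩; simp at h

lemma step_cons_cons {a b x y : V} {l : List V} :
    Step (a :: b :: l) x y ↔ (a = x ∧ b = y) ∨ Step (b :: l) x y := by
  constructor
  · rintro ⟨i, h, hx, hy⟩
    cases i with
    | zero => exact Or.inl ⟨hx, hy⟩
    | succ i =>
      refine Or.inr ⟨i, by simpa using h, ?_, ?_⟩ <;> simp_all
  · rintro (⟨rfl, rfl⟩ | ⟨i, h, hx, hy⟩)
    · exact ⟨0, by simp, rfl, rfl⟩
    · refine ⟨i + 1, by simpa using h, ?_, ?_⟩ <;> simp_all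

lemma step_cons {c x y : V} {l : List V} (h : Step l x y) : Step (c :: l) x y := by
  obtain ⟨i, h, hx, hy⟩ := h
  refine ⟨i + 1, by simpa using h, ?_, ?_⟩ <;> simp_all

lemma step_head {x y : V} (l : List V) : Step (x :: y :: l) x y :=
  ⟨0, by simp, rfl, rfl⟩

lemma step_append_left (l1 : List V) {l : List V} {x y : V} (h : Step l x y) :
    Step (l1 ++ l) x y := by
  induction l1 with
  | nil => exact h
  | cons c l1 ih => exact step_cons ih

lemma step_append_right {l1 : List V} (l2 : List V) {x y : V} (h : Step l1 x y) :
    Step (l1 ++ l2) x y := by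
  obtain ⟨i, h, hx, hy⟩ := h
  refine ⟨i, by simp; omega, ?_, ?_⟩ <;>
    rw [List.getElem_append_left (by omega)] <;> assumption

lemma step_getLast {l1 : List V} (hne : l1 ≠ []) (x : V) (l2 : List V) :
    Step (l1 ++ x :: l2) (l1.getLast hne) x := by
  induction l1 with
  | nil => simp at hne
  | cons c l1 ih =>
    cases l1 with
    | nil => exact step_head l2
    | cons d l1 =>
      have := ih (by simp)
      rw [List.getLast_cons (by simp)]
      exact step_cons this

lemma mem_edgesOfList {x y : V} : ∀ {l : List V},
    s(x, y) ∈ edgesOfList l ↔ Step l x y ∨ Step l y x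
  | [] => by simp [edgesOfList, step_nil]
  | [z] => by simp [edgesOfList, step_single]
  | a :: b :: l => by
    rw [edgesOfList, List.mem_cons, mem_edgesOfList (l := b :: l),
      step_cons_cons, step_cons_cons (x := y), Sym2.eq_iff]
    tauto

lemma rel_of_chain'_step {R : V → V → Prop} {l : List V} (h : List.IsChain R l)
    {x y : V} (hs : Step l x y) : R x y := by
  obtain ⟨i, hi, hx, hy⟩ := hs
  subst hx hy
  simpa using List.isChain_iff_getElem.mp h i (by omega)

lemma chain'_of_step {R : V → V → Prop} {l : List V}
    (h : ∀ x y, Step l x y → R x y) : List.IsChain R l := by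
  rw [List.isChain_iff_getElem]
  intro i hi
  exact h _ _ ⟨i, by omega, rfl, rfl⟩

lemma step_indexOf [DecidableEq V] {l : List V} (hnd : l.Nodup) {x y : V}
    (h : Step l x y) : x ∈ l ∧ y ∈ l ∧ l.idxOf y = l.idxOf x + 1 := by
  obtain ⟨i, hi, hx, hy⟩ := h
  subst hx hy
  have hmx : l[i] ∈ l := List.getElem_mem _
  have hmy : l[i+1] ∈ l := List.getElem_mem _
  have h1 : l.idxOf l[i] = i := by
    have := List.getElem_idxOf (xs := l) (x := l[i]) (List.idxOf_lt_length_iff.mpr hmx)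
    exact (hnd.getElem_inj_iff.mp this)
  have h2 : l.idxOf l[i+1] = i + 1 := by
    have := List.getElem_idxOf (xs := l) (x := l[i+1]) (List.idxOf_lt_length_iff.mpr hmy)
    exact (hnd.getElem_inj_iff.mp this)
  exact ⟨hmx, hmy, by omega⟩

lemma step_of_indexOf [DecidableEq V] {l : List V} {x y : V} (hx : x ∈ l) (hy : y ∈ l)
    (h : l.idxOf y = l.idxOf x + 1) : Step l x y := by
  refine ⟨l.idxOf x, by rw [← h]; exact List.idxOf_lt_length_iff.mpr hy, List.getElem_idxOf _, ?_⟩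
  have h2 := List.getElem_idxOf (xs := l) (x := y) (List.idxOf_lt_length_iff.mpr hy)
  simp only [h] at h2
  exact h2

lemma indexOf_lt_of_mem_take [DecidableEq V] {l : List V} {k : ℕ} {y : V}
    (h : y ∈ l.take k) : l.idxOf y < k := by
  induction l generalizing k with
  | nil => simp at h
  | cons a l ih =>
    cases k with
    | zero => simp at h
    | succ k =>
      simp only [List.take_succ_cons, List.mem_cons] at h
      rcases eq_or_ne y a with rfl | hne
      · simp
      · rw [List.idxOf_cons_ne _ (Ne.symm hne)]
        exact Nat.succ_lt_succ (ih (h.resolve_left hne))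


lemma edgesOfList_append (x : V) (l2 : List V) : ∀ l1 : List V,
    edgesOfList (l1 ++ x :: l2) = edgesOfList (l1 ++ [x]) ++ edgesOfList (x :: l2)
  | [] => by simp [edgesOfList]
  | [c] => by simp [edgesOfList]
  | c :: d :: l1 => by
    have h2 := edgesOfList_append x l2 (d :: l1)
    simp only [List.cons_append, edgesOfList] at h2 ⊢
    rw [h2]

lemma edgesOfList_map {W : Type*} (f : V → W) : ∀ l : List V,
    edgesOfList (l.map f) = (edgesOfList l).map (Sym2.map f)
  | [] => rfl
  | [x] => rfl
  | x :: y :: l => by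
    have ih := edgesOfList_map f (y :: l)
    simp only [List.map_cons] at ih ⊢
    rw [edgesOfList, edgesOfList, ih, List.map_cons, Sym2.map_pair_eq]

lemma walk_edges_eq {G : SimpleGraph V} {s t : V} (p : G.Walk s t) :
    p.edges = edgesOfList p.support := by
  induction p with
  | nil => rfl
  | @cons u w t h p ih =>
    rw [SimpleGraph.Walk.edges_cons, SimpleGraph.Walk.support_cons, ih,
      p.support_eq_cons, edgesOfList]

lemma walk_of_chain {G : SimpleGraph V} : ∀ (M : List V), M.IsChain G.Adj → M ≠ [] →
    ∃ (s t : V) (p : G.Walk s t), p.support = M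
  | [], _, hne => absurd rfl hne
  | [x], _, _ => ⟨x, x, SimpleGraph.Walk.nil, by simp⟩
  | x :: y :: M, hch, _ => by
    obtain ⟨s, t, p, hsup⟩ := walk_of_chain (y :: M) (hch.tail) (by simp)
    have hs : s = y := by
      have := p.support_eq_cons
      rw [hsup] at this
      exact (List.cons.injEq _ _ _ _).mp this.symm |>.1
    subst hs
    have hadj : G.Adj x s := (List.isChain_cons_cons.mp hch).1
    exact ⟨x, t, SimpleGraph.Walk.cons hadj p, by simp [hsup]⟩


lemma step_mem {l : List V} {x y : V} (h : Step l x y) : x ∈ l ∧ y ∈ l := by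
  obtain ⟨i, hi, hx, hy⟩ := h
  subst hx hy
  exact ⟨List.getElem_mem _, List.getElem_mem _⟩

lemma exists_bad_pair {R R' : V → V → Prop} :
    ∀ l : List V, List.IsChain R' l → ¬ List.IsChain R l →
    ∃ (l1 : List V) (a b : V) (l2 : List V), l = l1 ++ a :: b :: l2 ∧ R' a b ∧ ¬ R a b := by
  intro l
  induction l with
  | nil => intro _ h; exact absurd List.isChain_nil h
  | cons x l ih =>
    intro h' h
    cases l with
    | nil => exact absurd (List.isChain_singleton x) h
    | cons y l =>
      rw [List.isChain_cons_cons] at h'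
      by_cases hxy : R x y
      · have hnc : ¬ List.IsChain R (y :: l) := fun hc => h (List.isChain_cons_cons.mpr ⟨hxy, hc⟩)
        obtain ⟨l1, a, b, l2, heq, h1, h2⟩ := ih h'.2 hnc
        exact ⟨x :: l1, a, b, l2, by rw [List.cons_append, heq], h1, h2⟩
      · exact ⟨[], x, y, l, rfl, h'.1, hxy⟩

lemma step_take [DecidableEq V] {l : List V} {k : ℕ} {x y : V} (hnd : l.Nodup)
    (h : Step l x y) (hk : l.idxOf y < k) : Step (l.take k) x y := by
  obtain ⟨i, hi, hx, hy⟩ := h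
  have hidx : l.idxOf y = i + 1 := by
    subst hy
    have hm : l[i + 1] ∈ l := List.getElem_mem _
    have h3 := List.getElem_idxOf (xs := l) (x := l[i + 1]) (List.idxOf_lt_length_iff.mpr hm)
    exact hnd.getElem_inj_iff.mp h3
  refine ⟨i, by simp [List.length_take]; omega, ?_, ?_⟩ <;>
    rw [List.getElem_take] <;> assumption

lemma take_induced {G : SimpleGraph V} [DecidableEq V] {l : List V} (hnd : l.Nodup) (k : ℕ)
    (hind : ∀ x ∈ l, ∀ y ∈ l, G.Adj x y → s(x, y) ∈ edgesOfList l) :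
    ∀ x ∈ l.take k, ∀ y ∈ l.take k, G.Adj x y → s(x, y) ∈ edgesOfList (l.take k) := by
  intro x hx y hy hadj
  have hx' : x ∈ l := (List.take_sublist _ _).subset hx
  have hy' : y ∈ l := (List.take_sublist _ _).subset hy
  have h := mem_edgesOfList.mp (hind x hx' y hy' hadj)
  have hxk := indexOf_lt_of_mem_take hx
  have hyk := indexOf_lt_of_mem_take hy
  rw [mem_edgesOfList]
  rcases h with h | h
  · exact Or.inl (step_take hnd h hyk)
  · exact Or.inr (step_take hnd h hxk)

lemma exists_good [DecidableEq V] (G : SimpleGraph V) (v : V) (l : List V)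
    (hv : v ∉ l) (hnd : l.Nodup)
    (hch : l.IsChain (fun x y => G.Adj x y ∨ (G.Adj x v ∧ G.Adj v y)))
    (hind : ∀ x ∈ l, ∀ y ∈ l, x ≠ y → (G.Adj x y ∨ (G.Adj x v ∧ G.Adj v y)) →
      s(x, y) ∈ edgesOfList l) :
    ∃ M : List V, M.Nodup ∧ M.IsChain G.Adj ∧ M.length = l.length ∧
      (∀ x ∈ M, ∀ y ∈ M, G.Adj x y → s(x, y) ∈ edgesOfList M) := by
  by_cases hall : l.IsChain G.Adj
  · exact ⟨l, hnd, hall, rfl, fun x hx y hy hadj => hind x hx y hy hadj.ne (Or.inl hadj)⟩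
  obtain ⟨l1, a, b, l2, hl, hab', hnab⟩ := exists_bad_pair l hch hall
  have hav : G.Adj a v := (hab'.resolve_left hnab).1
  have hvb : G.Adj v b := (hab'.resolve_left hnab).2
  have hstep_ab : Step l a b := hl ▸ step_append_left l1 (step_head l2)
  obtain ⟨ha, hb, hiab⟩ := step_indexOf hnd hstep_ab
  have inj : ∀ x ∈ l, ∀ y ∈ l, l.idxOf x = l.idxOf y → x = y :=
    fun x hx y hy e => (List.idxOf_inj hx).mp e
  have hane : a ≠ b := fun e => by rw [e] at hiab; omega
  have key : ∀ x ∈ l, ∀ y ∈ l, x ≠ y → (G.Adj x y ∨ (G.Adj x v ∧ G.Adj v y)) →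
      l.idxOf y = l.idxOf x + 1 ∨ l.idxOf x = l.idxOf y + 1 := by
    intro x hx y hy hne hor
    rcases mem_edgesOfList.mp (hind x hx y hy hne hor) with hs | hs
    · exact Or.inl (step_indexOf hnd hs).2.2
    · exact Or.inr (step_indexOf hnd hs).2.2
  -- uniqueness of the bad consecutive pair
  have U : ∀ c d, Step l c d → ¬ G.Adj c d → c = a ∧ d = b := by
    intro c d hcd hncd
    have hor := rel_of_chain'_step hch hcd
    have hcv : G.Adj c v := (hor.resolve_left hncd).1
    have hvd : G.Adj v d := (hor.resolve_left hncd).2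
    obtain ⟨hc, hd, hicd⟩ := step_indexOf hnd hcd
    by_cases hca : c = a
    · subst hca
      exact ⟨rfl, inj d hd b hb (by omega)⟩
    exfalso
    have hia : l.idxOf c ≠ l.idxOf a := fun e => hca (inj c hc a ha e)
    by_cases hcb : c = b
    · have hicb : l.idxOf c = l.idxOf b := by rw [hcb]
      have had : a ≠ d := fun e => by
        have : l.idxOf a = l.idxOf d := by rw [e]
        omega
      rcases key a ha d hd had (Or.inr ⟨hav, hvd⟩) with h2 | h2 <;> omega
    have hicb : l.idxOf c ≠ l.idxOf b := fun e => hcb (inj c hc b hb e)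
    rcases key c hc b hb hcb (Or.inr ⟨hcv, hvb⟩) with h1 | h1 <;>
    · have had : a ≠ d := fun e => by
        have : l.idxOf a = l.idxOf d := by rw [e]
        omega
      rcases key a ha d hd had (Or.inr ⟨hav, hvd⟩) with h2 | h2 <;> omega
  -- the only neighbours of v among l are a and b
  have hclaim : ∀ y ∈ l, G.Adj v y → y = a ∨ y = b := by
    intro y hy hvy
    by_contra hn
    push_neg at hn
    have hya : y ≠ a := hn.1
    have hyb : y ≠ b := hn.2
    rcases key y hy a ha hya (Or.inr ⟨hvy.symm, hav.symm⟩) with h1 | h1 <;>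
      rcases key y hy b hb hyb (Or.inr ⟨hvy.symm, hvb⟩) with h2 | h2
    · omega
    · omega
    · exact hyb (inj y hy b hb (by omega))
    · omega
  -- set up the new list
  set M' : List V := l1 ++ a :: v :: b :: l2 with hM'
  have hmemM' : ∀ x, x ∈ M' ↔ x = v ∨ x ∈ l := by
    have hperm : M' ~ v :: l := by
      rw [hM', hl]
      calc l1 ++ a :: v :: b :: l2 = (l1 ++ [a]) ++ v :: (b :: l2) := by simp
        _ ~ v :: ((l1 ++ [a]) ++ b :: l2) := List.perm_middle
        _ = v :: (l1 ++ a :: b :: l2) := by simp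
    intro x
    rw [hperm.mem_iff, List.mem_cons]
  have hndM' : M'.Nodup := by
    have hperm : M' ~ v :: l := by
      rw [hM', hl]
      calc l1 ++ a :: v :: b :: l2 = (l1 ++ [a]) ++ v :: (b :: l2) := by simp
        _ ~ v :: ((l1 ++ [a]) ++ b :: l2) := List.perm_middle
        _ = v :: (l1 ++ a :: b :: l2) := by simp
    exact hperm.nodup_iff.mpr (List.nodup_cons.mpr ⟨hv, hnd⟩)
  -- non-membership facts
  have hndl' : (l1 ++ a :: b :: l2).Nodup := hl ▸ hnd
  have hal1 : a ∉ l1 := fun hmem => by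
    rw [List.nodup_append] at hndl'
    exact hndl'.2.2 a hmem a (by simp) rfl
  have hal2 : a ∉ b :: l2 := by
    rw [List.nodup_append] at hndl'
    have := hndl'.2.1
    rw [List.nodup_cons] at this
    exact this.1
  -- chain for M'
  have hchM' : M'.IsChain G.Adj := by
    rw [hM', List.isChain_append]
    refine ⟨?_, ?_, ?_⟩
    · apply chain'_of_step
      intro x y hs
      by_contra hn
      have hsl : Step l x y := hl ▸ step_append_right _ hs
      exact hal1 ((U x y hsl hn).1 ▸ (step_mem hs).1)
    · rw [List.isChain_cons_cons, List.isChain_cons_cons]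
      refine ⟨hav, hvb, ?_⟩
      apply chain'_of_step
      intro x y hs
      by_contra hn
      have hsl : Step l x y := hl ▸ step_append_left l1 (step_cons hs)
      exact hal2 ((U x y hsl hn).1 ▸ (step_mem hs).1)
    · intro x hx y hy
      have hne : l1 ≠ [] := by rintro rfl; simp at hx
      rw [List.getLast?_eq_getLast hne, Option.mem_some_iff] at hx
      rw [List.head?_cons, Option.mem_some_iff] at hy
      subst hx hy
      by_contra hn
      have hsl : Step l (l1.getLast hne) a := hl ▸ step_getLast hne a (b :: l2)
      exact hane (U _ _ hsl hn).2
  -- edges decomposition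
  have hEl : edgesOfList l =
      edgesOfList (l1 ++ [a]) ++ s(a, b) :: edgesOfList (b :: l2) := by
    rw [hl, edgesOfList_append a (b :: l2) l1]
    rfl
  have hEM : edgesOfList M' =
      edgesOfList (l1 ++ [a]) ++ s(a, v) :: s(v, b) :: edgesOfList (b :: l2) := by
    rw [hM', show l1 ++ a :: v :: b :: l2 = l1 ++ a :: (v :: b :: l2) from rfl,
      edgesOfList_append a (v :: b :: l2) l1]
    rfl
  -- induced condition for M'
  have hindM' : ∀ x ∈ M', ∀ y ∈ M', G.Adj x y → s(x, y) ∈ edgesOfList M' := by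
    intro x hx y hy hadj
    rw [hmemM'] at hx hy
    rcases hx with rfl | hx <;> rcases hy with rfl | hy
    · exact absurd hadj (G.irrefl)
    · rcases hclaim y hy hadj with rfl | rfl
      · rw [hEM, Sym2.eq_swap]
        simp
      · rw [hEM]
        simp
    · rcases hclaim x hx hadj.symm with rfl | rfl
      · rw [hEM]
        simp
      · rw [hEM, Sym2.eq_swap]
        simp
    · have hs := hind x hx y hy hadj.ne (Or.inl hadj)
      rw [hEl, List.mem_append, List.mem_cons] at hs
      rw [hEM, List.mem_append]
      rcases hs with hs | hs | hs
      · exact Or.inl hs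
      · exfalso
        rcases Sym2.eq_iff.mp hs with ⟨rfl, rfl⟩ | ⟨rfl, rfl⟩
        · exact hnab hadj
        · exact hnab hadj.symm
      · exact Or.inr (by simp [hs])
  -- now truncate
  refine ⟨M'.take l.length, (List.take_sublist _ _).nodup hndM', hchM'.take _, ?_, ?_⟩
  · have hlenM' : M'.length = l.length + 1 := by
      rw [hM', hl]
      simp
      omega
    rw [List.length_take, hlenM']
    omega
  · exact take_induced hndM' _ hindM'

end PkAux

/-- A graph is `P_k`-free if it has no induced path on `k` vertices. -/
def PkFree {V : Type*} (k : ℕ) (G : SimpleGraph V) : Prop :=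
  ¬ ∃ (s t : V) (p : G.Walk s t), p.IsPath ∧
      (∀ a ∈ p.support, ∀ b ∈ p.support, G.Adj a b → s(a, b) ∈ p.edges) ∧
      p.support.length = k

/-- Contraction of a vertex `v`: remove `v` and make its neighborhood a clique. -/
def contractVert {V : Type*} (G : SimpleGraph V) (v : V) : SimpleGraph {u : V // u ≠ v} where
  Adj a b := (a : V) ≠ (b : V) ∧ (G.Adj a b ∨ (G.Adj a v ∧ G.Adj v b))
  symm := by
    constructor
    rintro a b ⟨h1, h2 | ⟨h2, h3⟩⟩
    exacts [⟨h1.symm, Or.inl h2.symm⟩, ⟨h1.symm, Or.inr ⟨h3.symm, h2.symm⟩⟩]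
  loopless := by constructor; rintro a ⟨h, -⟩; exact h rfl

/-- `P_k`-free graphs are closed under vertex contraction. -/
theorem stmt5 {V : Type*} (k : ℕ) (G : SimpleGraph V) (v : V) (h : PkFree k G) :
    PkFree k (contractVert G v) := by
  classical
  rintro ⟨s, t, p, hp, hip, hlen⟩
  set l : List V := p.support.map Subtype.val with hl
  have hvl : v ∉ l := by
    rw [hl]
    simp only [List.mem_map, not_exists]
    rintro ⟨u, hu⟩ ⟨-, he⟩
    exact hu he
  have hndl : l.Nodup := hp.support_nodup.map Subtype.val_injective
  have hchl : l.IsChain (fun x y => G.Adj x y ∨ (G.Adj x v ∧ G.Adj v y)) := by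
    rw [hl]
    exact List.isChain_map_of_isChain _ (fun a b hab => hab.2) p.isChain_adj_support
  have hindl : ∀ x ∈ l, ∀ y ∈ l, x ≠ y → (G.Adj x y ∨ (G.Adj x v ∧ G.Adj v y)) →
      s(x, y) ∈ PkAux.edgesOfList l := by
    intro x hx y hy hne hor
    rw [hl, List.mem_map] at hx hy
    obtain ⟨x', hx', rfl⟩ := hx
    obtain ⟨y', hy', rfl⟩ := hy
    have hadj : (contractVert G v).Adj x' y' := ⟨hne, hor⟩
    have hmem := hip x' hx' y' hy' hadj
    rw [PkAux.walk_edges_eq] at hmem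
    rw [hl, PkAux.edgesOfList_map]
    exact List.mem_map.mpr ⟨s(x', y'), hmem, by simp⟩
  obtain ⟨M, hMnd, hMch, hMlen, hMind⟩ := PkAux.exists_good G v l hvl hndl hchl hindl
  have hk : l.length = k := by rw [hl, List.length_map]; exact hlen
  have hMne : M ≠ [] := by
    intro e
    rw [e] at hMlen
    have : l = [] := List.length_eq_zero_iff.mp hMlen.symm
    rw [hl] at this
    exact p.support_ne_nil (List.map_eq_nil_iff.mp this)
  obtain ⟨s0, t0, q, hq⟩ := PkAux.walk_of_chain M hMch hMne
  refine h ⟨s0, t0, q, SimpleGraph.Walk.IsPath.mk' (hq ▸ hMnd), ?_, by rw [hq, hMlen, hk]⟩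
  intro a ha b hb hadj
  rw [hq] at ha hb
  rw [PkAux.walk_edges_eq, hq]
  exact hMind a ha b hb hadj
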